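/- arXiv:2509.07372 — 3 statements merged into one kernel-verified Lean document; each statement's English description precedes it below -/
import Mathlib

section
/- Let x_1, …, x_n ∈ ℝ^d be arbitrary points, r > 0 and α > 0, and set c = 2m_0/(m_2 r²). Then for every real λ ≠ c: λ is an eigenvalue of the n×n matrix L̃ if and only if there exists f ∈ F with f not identically zero and (L̃_n f)(x) = λ f(x) for all x ∈ ℝ^d; moreover the eigenspace {f ∈ F : L̃_n f = λ f} has the same finite dimension as the kernel of L̃ − λI in ℝⁿ. In other words, L̃ and L̃_n have the same eigenvalues with the same multiplicities, except possibly at c. -/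
open MeasureTheory ProbabilityTheory Filter
open scoped ENNReal NNReal BigOperators

/-- The ℓ^p norm on `ℝ^d`, for `p ∈ [1,∞]` (encoded as `p : ℝ≥0∞`). -/
noncomputable def lpNormR {d : ℕ} (p : ℝ≥0∞) (x : Fin d → ℝ) : ℝ :=
  if p = ∞ then ⨆ i, |x i| else (∑ i, |x i| ^ p.toReal) ^ (1 / p.toReal)

/-- The Gaussian weight `ρ(x) = exp(-∑ x_i²/(2σ_i²))`. -/
noncomputable def gaussWeight {d : ℕ} (σ : Fin d → ℝ) (x : Fin d → ℝ) : ℝ :=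
  Real.exp (-(∑ i, x i ^ 2 / (2 * σ i ^ 2)))

/-- The product Gaussian measure `N_d(0, diag(σ_1²,…,σ_d²))` on `ℝ^d`. -/
noncomputable def gaussPi (d : ℕ) (σ : Fin d → ℝ) : Measure (Fin d → ℝ) :=
  Measure.pi fun i => gaussianReal 0 (Real.toNNReal (σ i ^ 2))

/-- The moment constant `m_l = ∫_{ℝ^d} |u_1|^l 1(‖u‖_p ≤ 1) g(‖u‖_p) du`. -/
noncomputable def mmt (d : ℕ) (hd : 0 < d) (p : ℝ≥0∞) (g : ℝ → ℝ) (l : ℕ) : ℝ :=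
  ∫ u : Fin d → ℝ,
    if lpNormR p u ≤ 1 then |u ⟨0, hd⟩| ^ l * g (lpNormR p u) else 0

/-- The affinity matrix `K(i,j) = 1(‖x_i-x_j‖_p ≤ r) g(‖x_i-x_j‖_p/r)`. -/
noncomputable def affK {d n : ℕ} (p : ℝ≥0∞) (g : ℝ → ℝ) (r : ℝ)
    (x : Fin n → Fin d → ℝ) : Matrix (Fin n) (Fin n) ℝ :=
  Matrix.of fun i j =>
    if lpNormR p (x i - x j) ≤ r then g (lpNormR p (x i - x j) / r) else 0

/-- The scaled random-walk Laplacian `L = (2m_0/(m_2 r²)) (I - D⁻¹K)`. -/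
noncomputable def lapL {d n : ℕ} (hd : 0 < d) (p : ℝ≥0∞) (g : ℝ → ℝ) (r : ℝ)
    (x : Fin n → Fin d → ℝ) : Matrix (Fin n) (Fin n) ℝ :=
  (2 * mmt d hd p g 0 / (mmt d hd p g 2 * r ^ 2)) •
    (1 - Matrix.of fun i j => affK p g r x i j / ∑ l, affK p g r x i l)

/-- The eigenvalues of a matrix (real roots of the characteristic polynomial,
with multiplicity), sorted in non-decreasing order. -/
noncomputable def sortedEigs {n : ℕ} (A : Matrix (Fin n) (Fin n) ℝ) : List ℝ :=
  Multiset.sort (Matrix.charpoly A).roots (· ≤ ·)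

/-- The number of eigenvalues (real roots of the characteristic polynomial, with
multiplicity) that are `≤ δ`. -/
noncomputable def eigCountLE {n : ℕ} (A : Matrix (Fin n) (Fin n) ℝ) (δ : ℝ) : ℕ :=
  Multiset.card (Multiset.filter (fun t => t ≤ δ) (Matrix.charpoly A).roots)

/-- The `m`-th physicist's Hermite polynomial `H_m(x) = (-1)^m e^{x²} (d/dx)^m e^{-x²}`. -/
noncomputable def physHermite (m : ℕ) (x : ℝ) : ℝ :=
  (-1 : ℝ) ^ m * Real.exp (x ^ 2) * iteratedDeriv m (fun t => Real.exp (-t ^ 2)) x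

/-- The sigmoid function `s(t) = (1+e^{-t})⁻¹`. -/
noncomputable def sigmoid (t : ℝ) : ℝ := (1 + Real.exp (-t))⁻¹

/-- The smoothed affinity matrix `K̃(i,j) = s(α(r²-‖x_i-x_j‖_p²)) g*(‖x_i-x_j‖_p/r)`. -/
noncomputable def affKs {d n : ℕ} (p : ℝ≥0∞) (gs : ℝ → ℝ) (α r : ℝ)
    (x : Fin n → Fin d → ℝ) : Matrix (Fin n) (Fin n) ℝ :=
  Matrix.of fun i j =>
    sigmoid (α * (r ^ 2 - lpNormR p (x i - x j) ^ 2)) * gs (lpNormR p (x i - x j) / r)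

/-- The smoothed scaled random-walk Laplacian `L̃ = (2m_0/(m_2 r²)) (I - D̃⁻¹K̃)`. -/
noncomputable def lapLs {d n : ℕ} (hd : 0 < d) (p : ℝ≥0∞) (g gs : ℝ → ℝ) (α r : ℝ)
    (x : Fin n → Fin d → ℝ) : Matrix (Fin n) (Fin n) ℝ :=
  (2 * mmt d hd p g 0 / (mmt d hd p g 2 * r ^ 2)) •
    (1 - Matrix.of fun i j => affKs p gs α r x i j / ∑ l, affKs p gs α r x i l)

/-- The ℓ²→ℓ² operator norm of a real square matrix. -/
noncomputable def matOpNorm {n : ℕ} (A : Matrix (Fin n) (Fin n) ℝ) : ℝ :=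
  ‖Matrix.toEuclideanCLM (𝕜 := ℝ) A‖

/-- The weighted L² norm `‖f‖_F = (∫ f(x)² ρ(x)² dx)^{1/2}`. -/
noncomputable def Fnorm {d : ℕ} (σ : Fin d → ℝ) (f : (Fin d → ℝ) → ℝ) : ℝ :=
  (∫ x : Fin d → ℝ, f x ^ 2 * gaussWeight σ x ^ 2) ^ ((1 : ℝ) / 2)

/-- Partial derivative `∂f/∂x_i`. -/
noncomputable def pd {d : ℕ} (i : Fin d) (f : (Fin d → ℝ) → ℝ) : (Fin d → ℝ) → ℝ :=
  fun x => fderiv ℝ f x (Pi.single i 1)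

/-- The weighted Laplace–Beltrami operator
`Δ_ρ f(x) = -∑ ∂²f/∂x_i²(x) + ∑ (2x_i/σ_i²) ∂f/∂x_i(x)`. -/
noncomputable def deltaRho {d : ℕ} (σ : Fin d → ℝ) (f : (Fin d → ℝ) → ℝ) :
    (Fin d → ℝ) → ℝ :=
  fun x => -(∑ i, pd i (pd i f) x) + ∑ i, (2 * x i / σ i ^ 2) * pd i f x

/-- The deterministic integral operator `T_r` (Tn). -/
noncomputable def Tn {d : ℕ} (hd : 0 < d) (p : ℝ≥0∞) (σ : Fin d → ℝ) (g : ℝ → ℝ)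
    (r : ℝ) (f : (Fin d → ℝ) → ℝ) (x : Fin d → ℝ) : ℝ :=
  (2 / (r ^ (d + 2) * mmt d hd p g 2 * gaussWeight σ x)) *
    ∫ y : Fin d → ℝ,
      if lpNormR p (x - y) ≤ r then
        g (lpNormR p (x - y) / r) * (f x - f y) * gaussWeight σ y
      else 0

/-- The intermediate operator `T̃_r`. -/
noncomputable def TtildeOp {d : ℕ} (hd : 0 < d) (p : ℝ≥0∞) (σ : Fin d → ℝ)
    (g : ℝ → ℝ) (r : ℝ) (f : (Fin d → ℝ) → ℝ) (x : Fin d → ℝ) : ℝ :=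
  (2 * mmt d hd p g 0 / (mmt d hd p g 2 * r ^ 2)) *
    (∫ y : Fin d → ℝ,
      if lpNormR p (x - y) ≤ r then
        g (lpNormR p (x - y) / r) * (f x - f y) * gaussWeight σ y
      else 0) /
    (∫ y : Fin d → ℝ,
      if lpNormR p (x - y) ≤ r then g (lpNormR p (x - y) / r) * gaussWeight σ y else 0)

/-- The empirical operator `L̃_n`. -/
noncomputable def empOp {d n : ℕ} (hd : 0 < d) (p : ℝ≥0∞) (g gs : ℝ → ℝ) (α r : ℝ)
    (x : Fin n → Fin d → ℝ) (f : (Fin d → ℝ) → ℝ) (y : Fin d → ℝ) : ℝ :=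
  (2 * mmt d hd p g 0 / (mmt d hd p g 2 * r ^ 2)) *
    (∑ j, sigmoid (α * (r ^ 2 - lpNormR p (y - x j) ^ 2)) *
        gs (lpNormR p (y - x j) / r) * (f y - f (x j))) /
    (∑ j, sigmoid (α * (r ^ 2 - lpNormR p (y - x j) ^ 2)) *
        gs (lpNormR p (y - x j) / r))


section AuxS2Sn

open MeasureTheory

lemma lpNormR_nonneg' {d : ℕ} (p : ℝ≥0∞) (u : Fin d → ℝ) : 0 ≤ lpNormR p u := by
  unfold lpNormR
  split_ifs
  · exact Real.iSup_nonneg fun i => abs_nonneg _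
  · exact Real.rpow_nonneg
      (Finset.sum_nonneg fun i _ => Real.rpow_nonneg (abs_nonneg _) _) _

lemma lpNormR_measurable' {d : ℕ} (p : ℝ≥0∞) :
    Measurable fun u : Fin d → ℝ => lpNormR p u := by
  unfold lpNormR
  split_ifs
  · exact Measurable.iSup fun i => (measurable_pi_apply i).abs
  · refine ((Real.continuous_rpow_const (by positivity)).measurable).comp ?_
    exact Finset.measurable_sum _ fun i _ =>
      ((Real.continuous_rpow_const ENNReal.toReal_nonneg).measurable).comp
        (measurable_pi_apply i).abs

lemma sigmoid_pos' (t : ℝ) : 0 < sigmoid t := by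
  unfold sigmoid; positivity

lemma sigmoid_continuous' : Continuous sigmoid := by
  have h : ∀ t : ℝ, 1 + Real.exp (-t) ≠ 0 := fun t => by positivity
  exact (continuous_const.add (Real.continuous_exp.comp continuous_neg)).inv₀ h

lemma integrable_gaussWeight_sq' {d : ℕ} (σ : Fin d → ℝ) (hσ : ∀ i, 0 < σ i) :
    Integrable (fun x : Fin d → ℝ => gaussWeight σ x ^ 2) := by
  have h : ∀ x : Fin d → ℝ,
      gaussWeight σ x ^ 2 = ∏ i, Real.exp (-(σ i ^ 2)⁻¹ * x i ^ 2) := by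
    intro x
    rw [gaussWeight, sq, ← Real.exp_add, ← Real.exp_sum]
    congr 1
    rw [← neg_add, ← Finset.sum_add_distrib]
    rw [← Finset.sum_neg_distrib]
    refine Finset.sum_congr rfl fun i _ => ?_
    have hσi := (hσ i).ne'
    field_simp
    ring
  simp only [h]
  exact Integrable.fintype_prod fun i =>
    integrable_exp_neg_mul_sq (inv_pos.mpr (pow_pos (hσ i) 2))

end AuxS2Sn

/-- Lemma `S2Sn`: for every `λ ≠ 2m_0/(m_2 r²)`, `λ` is an eigenvalue of
the matrix `L̃` iff there is a not-identically-zero `f ∈ F` with `L̃_n f = λ f`;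
moreover the eigenspace `{f ∈ F : L̃_n f = λf}` is a subspace of the same finite
dimension as the kernel of `L̃ - λ I` in `ℝⁿ`. -/
theorem matrix_operator_spectrum_match
    (d : ℕ) (hd : 0 < d) (σ : Fin d → ℝ) (hσ : ∀ i, 0 < σ i)
    (p : ℝ≥0∞) (hp : 1 ≤ p)
    (g : ℝ → ℝ) (hg : ContDiffOn ℝ 2 g (Set.Ici 0))
    (c₁ c₂ : ℝ) (hc₁ : 0 < c₁)
    (hgb : ∀ y ∈ Set.Icc (0 : ℝ) 1, c₁ ≤ g y ∧ g y ≤ c₂)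
    (gs : ℝ → ℝ) (hgs : ContDiffOn ℝ 2 gs (Set.Ici 0))
    (hgseq : ∀ y ∈ Set.Icc (0 : ℝ) 1, gs y = g y)
    (hgspos : ∀ y, 0 ≤ y → 0 < gs y)
    (hgsbdd : ∃ Cg : ℝ, ∀ y, 0 ≤ y → gs y ≤ Cg)
    (n : ℕ) (hn : 0 < n) (x : Fin n → Fin d → ℝ)
    (r : ℝ) (hr : 0 < r) (α : ℝ) (hα : 0 < α)
    (lam : ℝ) (hlam : lam ≠ 2 * mmt d hd p g 0 / (mmt d hd p g 2 * r ^ 2)) :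
    ((∃ v : Fin n → ℝ, v ≠ 0 ∧ (lapLs hd p g gs α r x).mulVec v = lam • v) ↔
      (∃ f : (Fin d → ℝ) → ℝ,
        MeasureTheory.Integrable (fun y => f y ^ 2 * gaussWeight σ y ^ 2) ∧ f ≠ 0 ∧
        ∀ y, empOp hd p g gs α r x f y = lam * f y)) ∧
    ∃ V : Submodule ℝ ((Fin d → ℝ) → ℝ),
      (V : Set ((Fin d → ℝ) → ℝ)) =
        {f | MeasureTheory.Integrable (fun y => f y ^ 2 * gaussWeight σ y ^ 2) ∧
          ∀ y, empOp hd p g gs α r x f y = lam * f y} ∧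
      Module.finrank ℝ V =
        Module.finrank ℝ
          (LinearMap.ker (Matrix.toLin' (lapLs hd p g gs α r x - lam • 1))) := by
  classical
  have hne : Nonempty (Fin n) := Fin.pos_iff_nonempty.mp hn
  obtain ⟨c, hc⟩ : ∃ c : ℝ, c = 2 * mmt d hd p g 0 / (mmt d hd p g 2 * r ^ 2) :=
    ⟨_, rfl⟩
  rw [← hc] at hlam
  obtain ⟨w, hwdef⟩ : ∃ w : (Fin d → ℝ) → Fin n → ℝ, w = fun y j =>
      sigmoid (α * (r ^ 2 - lpNormR p (y - x j) ^ 2)) * gs (lpNormR p (y - x j) / r) :=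
    ⟨_, rfl⟩
  obtain ⟨D, hDdef⟩ : ∃ D : (Fin d → ℝ) → ℝ, D = fun y => ∑ j, w y j := ⟨_, rfl⟩
  have hwpos : ∀ y j, 0 < w y j := by
    intro y j
    rw [hwdef]
    exact mul_pos (sigmoid_pos' _)
      (hgspos _ (div_nonneg (lpNormR_nonneg' _ _) hr.le))
  have hDpos : ∀ y, 0 < D y := by
    intro y
    rw [hDdef]
    exact Finset.sum_pos (fun j _ => hwpos y j) Finset.univ_nonempty
  have hclam : c - lam ≠ 0 := sub_ne_zero.mpr (Ne.symm hlam)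
  -- matrix entries
  have hent : ∀ i j, lapLs hd p g gs α r x i j
      = c * ((if i = j then (1 : ℝ) else 0) - w (x i) j / D (x i)) := by
    intro i j
    rw [hc, hDdef, hwdef]
    simp only [lapLs, Matrix.smul_apply, Matrix.sub_apply, Matrix.one_apply,
      Matrix.of_apply, smul_eq_mul, affKs]
  have hmul : ∀ (v : Fin n → ℝ) (i : Fin n), (lapLs hd p g gs α r x).mulVec v i
      = c * v i - c * (∑ j, w (x i) j * v j) / D (x i) := by
    intro v i
    have h1 : (lapLs hd p g gs α r x).mulVec v i
        = ∑ j, (c * ((if i = j then (1 : ℝ) else 0) - w (x i) j / D (x i))) * v j := by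
      simp only [Matrix.mulVec, dotProduct]
      exact Finset.sum_congr rfl fun j _ => by rw [hent i j]
    rw [h1]
    have h2 : ∀ j, (c * ((if i = j then (1 : ℝ) else 0) - w (x i) j / D (x i))) * v j
        = (if i = j then c * v j else 0) - c / D (x i) * (w (x i) j * v j) := by
      intro j; split_ifs <;> ring
    simp only [h2]
    rw [Finset.sum_sub_distrib, Finset.sum_ite_eq, ← Finset.mul_sum]
    simp only [Finset.mem_univ, if_true]
    ring
  have hmatiff : ∀ v : Fin n → ℝ, (lapLs hd p g gs α r x).mulVec v = lam • v
      ↔ ∀ i, (c - lam) * v i = c * (∑ j, w (x i) j * v j) / D (x i) := by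
    intro v
    rw [funext_iff]
    refine forall_congr' fun i => ?_
    rw [hmul v i]
    simp only [Pi.smul_apply, smul_eq_mul]
    constructor
    · intro h; linarith [h]
    · intro h; linarith [h]
  -- the operator equation
  have hempeq : ∀ (f : (Fin d → ℝ) → ℝ) (y : Fin d → ℝ), empOp hd p g gs α r x f y
      = c * (∑ j, w y j * (f y - f (x j))) / D y := by
    intro f y
    rw [hc, hDdef, hwdef]
    rfl
  have hsum : ∀ (f : (Fin d → ℝ) → ℝ) (y : Fin d → ℝ),
      (∑ j, w y j * (f y - f (x j))) = f y * D y - ∑ j, w y j * f (x j) := by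
    intro f y
    rw [hDdef]
    calc ∑ j, w y j * (f y - f (x j))
        = ∑ j, (w y j * f y - w y j * f (x j)) := by
          exact Finset.sum_congr rfl fun j _ => by ring
      _ = (∑ j, w y j) * f y - ∑ j, w y j * f (x j) := by
          rw [Finset.sum_sub_distrib, Finset.sum_mul]
      _ = f y * (∑ j, w y j) - ∑ j, w y j * f (x j) := by rw [mul_comm]
  have hop : ∀ (f : (Fin d → ℝ) → ℝ) (y : Fin d → ℝ),
      empOp hd p g gs α r x f y = lam * f y
      ↔ (c - lam) * f y = c * (∑ j, w y j * f (x j)) / D y := by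
    intro f y
    have hDy := (hDpos y).ne'
    rw [hempeq f y, hsum f y]
    constructor
    · intro h
      rw [div_eq_iff hDy] at h
      rw [eq_div_iff hDy]
      linear_combination h
    · intro h
      rw [eq_div_iff hDy] at h
      rw [div_eq_iff hDy]
      linear_combination h
  -- the extension operator
  obtain ⟨E, hEapp⟩ : ∃ E : (Fin n → ℝ) →ₗ[ℝ] ((Fin d → ℝ) → ℝ),
      ∀ v y, E v y = c / (c - lam) * (∑ j, w y j * v j) / D y := by
    refine ⟨{ toFun := fun v y => c / (c - lam) * (∑ j, w y j * v j) / D y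
              map_add' := ?_, map_smul' := ?_ }, fun v y => rfl⟩
    · intro u v; funext y
      simp only [Pi.add_apply]
      have h : ∑ j, w y j * (u j + v j) = (∑ j, w y j * u j) + ∑ j, w y j * v j := by
        rw [← Finset.sum_add_distrib]
        exact Finset.sum_congr rfl fun j _ => by ring
      rw [h]; ring
    · intro a v; funext y
      simp only [Pi.smul_apply, smul_eq_mul, RingHom.id_apply]
      have h : ∑ j, w y j * (a * v j) = a * ∑ j, w y j * v j := by
        rw [Finset.mul_sum]
        exact Finset.sum_congr rfl fun j _ => by ring
      rw [h]; ring
  have hfix : ∀ v : Fin n → ℝ,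
      (∀ i, (c - lam) * v i = c * (∑ j, w (x i) j * v j) / D (x i)) →
      ∀ i, E v (x i) = v i := by
    intro v hv i
    have hD' := (hDpos (x i)).ne'
    have h2 : (c - lam) * v i * D (x i) = c * (∑ j, w (x i) j * v j) := by
      rw [hv i, div_mul_cancel₀ _ hD']
    rw [hEapp]
    field_simp
    linear_combination -h2
  have heig : ∀ v : Fin n → ℝ,
      (∀ i, (c - lam) * v i = c * (∑ j, w (x i) j * v j) / D (x i)) →
      ∀ y, (c - lam) * E v y = c * (∑ j, w y j * E v (x j)) / D y := by
    intro v hv y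
    have hfx : ∑ j, w y j * E v (x j) = ∑ j, w y j * v j :=
      Finset.sum_congr rfl fun j _ => by rw [hfix v hv j]
    rw [hfx, hEapp]
    have hDy := (hDpos y).ne'
    field_simp
  -- measurability
  have hwm : ∀ j, Measurable fun y : Fin d → ℝ => w y j := by
    intro j
    rw [hwdef]
    have hsub : Measurable fun y : Fin d → ℝ => y - x j :=
      measurable_id.sub measurable_const
    have hnorm : Measurable fun y : Fin d → ℝ => lpNormR p (y - x j) :=
      (lpNormR_measurable' p).comp hsub
    have h1 : Measurable fun y : Fin d → ℝ =>
        sigmoid (α * (r ^ 2 - lpNormR p (y - x j) ^ 2)) :=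
      sigmoid_continuous'.measurable.comp
        (measurable_const.mul (measurable_const.sub (hnorm.pow_const 2)))
    have hG : Continuous fun t : ℝ => gs (max t 0) :=
      hgs.continuousOn.comp_continuous (continuous_id.max continuous_const)
        fun t => Set.mem_Ici.mpr (le_max_right _ _)
    have h2 : Measurable fun y : Fin d → ℝ => gs (lpNormR p (y - x j) / r) := by
      have he : ∀ y : Fin d → ℝ, gs (lpNormR p (y - x j) / r)
          = gs (max (lpNormR p (y - x j) / r) 0) := by
        intro y
        rw [max_eq_left (div_nonneg (lpNormR_nonneg' _ _) hr.le)]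
      simp only [he]
      exact hG.measurable.comp (hnorm.div_const r)
    exact h1.mul h2
  have hDm : Measurable D := by
    rw [hDdef]; exact Finset.measurable_sum _ fun j _ => hwm j
  have hEm : ∀ v : Fin n → ℝ, Measurable fun y => E v y := by
    intro v
    simp only [hEapp]
    have hS : Measurable fun y => ∑ j, w y j * v j :=
      Finset.measurable_sum _ fun j _ => (hwm j).mul_const _
    exact (measurable_const.mul hS).div hDm
  -- integrability of E v against the weight
  have hint : ∀ v : Fin n → ℝ,
      MeasureTheory.Integrable (fun y => E v y ^ 2 * gaussWeight σ y ^ 2) := by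
    intro v
    set C : ℝ := |c / (c - lam)| * ∑ j, |v j| with hC
    have hbound : ∀ y, |E v y| ≤ C := by
      intro y
      have hDy := hDpos y
      have hS : |∑ j, w y j * v j| ≤ D y * ∑ j, |v j| := by
        calc |∑ j, w y j * v j| ≤ ∑ j, |w y j * v j| := Finset.abs_sum_le_sum_abs _ _
          _ = ∑ j, w y j * |v j| := Finset.sum_congr rfl fun j _ => by
              rw [abs_mul, abs_of_pos (hwpos y j)]
          _ ≤ ∑ j, D y * |v j| := Finset.sum_le_sum fun j _ =>
              mul_le_mul_of_nonneg_right (by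
                rw [hDdef]
                exact Finset.single_le_sum (fun l _ => (hwpos y l).le)
                  (Finset.mem_univ j)) (abs_nonneg _)
          _ = D y * ∑ j, |v j| := by rw [Finset.mul_sum]
      rw [hEapp, abs_div, abs_mul, abs_of_pos hDy, div_le_iff₀ hDy]
      calc |c / (c - lam)| * |∑ j, w y j * v j|
          ≤ |c / (c - lam)| * (D y * ∑ j, |v j|) :=
            mul_le_mul_of_nonneg_left hS (abs_nonneg _)
        _ = C * D y := by rw [hC]; ring
    have hgwm : Measurable fun y : Fin d → ℝ => gaussWeight σ y := by
      unfold gaussWeight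
      exact (Finset.measurable_sum _ fun i _ =>
        ((measurable_pi_apply i).pow_const 2).div_const _).neg.exp
    refine MeasureTheory.Integrable.mono'
      ((integrable_gaussWeight_sq' σ hσ).const_mul (C ^ 2))
      (((hEm v).pow_const 2).mul (hgwm.pow_const 2)).aestronglyMeasurable
      (Filter.Eventually.of_forall fun y => ?_)
    rw [Real.norm_eq_abs, abs_mul, abs_of_nonneg (sq_nonneg (E v y)),
      abs_of_nonneg (sq_nonneg (gaussWeight σ y))]
    have hE2 : E v y ^ 2 ≤ C ^ 2 := by
      rw [← sq_abs (E v y)]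
      exact pow_le_pow_left₀ (abs_nonneg _) (hbound y) 2
    exact mul_le_mul_of_nonneg_right hE2 (sq_nonneg _)
  -- kernel characterization
  have hker : ∀ v : Fin n → ℝ,
      v ∈ LinearMap.ker (Matrix.toLin' (lapLs hd p g gs α r x - lam • 1))
      ↔ ∀ i, (c - lam) * v i = c * (∑ j, w (x i) j * v j) / D (x i) := by
    intro v
    rw [LinearMap.mem_ker, Matrix.toLin'_apply, Matrix.sub_mulVec,
      Matrix.smul_mulVec, Matrix.one_mulVec, sub_eq_zero]
    exact hmatiff v
  constructor
  · constructor
    · rintro ⟨v, hv0, hveq⟩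
      have hvcond := (hmatiff v).mp hveq
      refine ⟨E v, hint v, ?_, fun y => (hop (E v) y).mpr (heig v hvcond y)⟩
      intro hE0
      apply hv0
      funext i
      have h := hfix v hvcond i
      rw [hE0] at h
      simpa using h.symm
    · rintro ⟨f, hfint, hf0, hfeq⟩
      refine ⟨fun i => f (x i), ?_, (hmatiff _).mpr fun i => (hop f (x i)).mp (hfeq (x i))⟩
      intro hv0
      apply hf0
      funext y
      simp only [Pi.zero_apply]
      have h1 := (hop f y).mp (hfeq y)
      have h2 : ∑ j, w y j * f (x j) = 0 := by
        refine Finset.sum_eq_zero fun j _ => ?_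
        have hfj : f (x j) = 0 := by simpa using congrFun hv0 j
        rw [hfj, mul_zero]
      rw [h2] at h1
      simp only [mul_zero, zero_div] at h1
      rcases mul_eq_zero.mp h1 with h | h
      · exact absurd h hclam
      · exact h
  · refine ⟨Submodule.map E (LinearMap.ker
        (Matrix.toLin' (lapLs hd p g gs α r x - lam • 1))), ?_, ?_⟩
    · ext f
      simp only [SetLike.mem_coe, Submodule.mem_map, Set.mem_setOf_eq]
      constructor
      · rintro ⟨v, hvK, rfl⟩
        have hvcond := (hker v).mp hvK
        exact ⟨hint v, fun y => (hop (E v) y).mpr (heig v hvcond y)⟩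
      · rintro ⟨hfint, hfeq⟩
        refine ⟨fun i => f (x i),
          (hker _).mpr fun i => (hop f (x i)).mp (hfeq (x i)), ?_⟩
        funext y
        have h1 := (hop f y).mp (hfeq y)
        have hDy := (hDpos y).ne'
        have h2 : (c - lam) * f y * D y = c * (∑ j, w y j * f (x j)) := by
          rw [h1, div_mul_cancel₀ _ hDy]
        rw [hEapp]
        field_simp
        linear_combination -h2
    · have hinj : Function.Injective (LinearMap.codRestrict
          (Submodule.map E (LinearMap.ker
            (Matrix.toLin' (lapLs hd p g gs α r x - lam • 1))))
          (E.comp (LinearMap.ker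
            (Matrix.toLin' (lapLs hd p g gs α r x - lam • 1))).subtype)
          (fun v => Submodule.mem_map_of_mem v.2)) := by
        intro u v huv
        have h1 : E u.1 = E v.1 := congrArg Subtype.val huv
        apply Subtype.ext
        funext i
        have hu := hfix u.1 ((hker u.1).mp u.2) i
        have hv := hfix v.1 ((hker v.1).mp v.2) i
        rw [← hu, ← hv, h1]
      have hsurj : Function.Surjective (LinearMap.codRestrict
          (Submodule.map E (LinearMap.ker
            (Matrix.toLin' (lapLs hd p g gs α r x - lam • 1))))
          (E.comp (LinearMap.ker
            (Matrix.toLin' (lapLs hd p g gs α r x - lam • 1))).subtype)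
          (fun v => Submodule.mem_map_of_mem v.2)) := by
        rintro ⟨f, hf⟩
        obtain ⟨v, hvK, hvf⟩ := Submodule.mem_map.mp hf
        exact ⟨⟨v, hvK⟩, Subtype.ext hvf⟩
      exact (LinearEquiv.finrank_eq
        (LinearEquiv.ofBijective _ ⟨hinj, hsurj⟩)).symm
end

section
/- For all k, j ∈ ℕ: ∫_ℝ H_k(x)² H_j(x)² e^{−x²} dx ≤ √π · (k+1)! · j! · 8^{k+j}. -/
open MeasureTheory ProbabilityTheory Filter
open scoped ENNReal NNReal BigOperators

namespace HermiteAux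

open Polynomial MeasureTheory Finset

noncomputable def HP : ℕ → Polynomial ℝ
  | 0 => 1
  | n+1 => C 2 * X * HP n - derivative (HP n)

lemma HP_zero : HP 0 = 1 := rfl
lemma HP_succ (n : ℕ) : HP (n+1) = C 2 * X * HP n - derivative (HP n) := rfl
lemma HP_one : HP 1 = C 2 * X := by simp [HP_succ, HP_zero]

lemma HP_deriv (n : ℕ) : derivative (HP (n+1)) = C (2*(n+1) : ℝ) * HP n := by
  induction n with
  | zero => rw [HP_one]; simp [HP_zero]
  | succ n ih =>
    have h : derivative (HP n) = C 2 * X * HP n - HP (n+1) := by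
      rw [HP_succ]; ring
    have e1 : derivative (C (2:ℝ) * X * HP (n+1))
        = C 2 * HP (n+1) + C 2 * X * (C (2*(n+1) : ℝ) * HP n) := by
      rw [derivative_mul, derivative_mul, derivative_C, ih, derivative_X]; ring
    rw [HP_succ (n+1), derivative_sub, e1, ih, derivative_mul, derivative_C, h]
    have h2 : (C (2*(↑n+1) : ℝ)) * (C 2 * X * HP n - HP (n+1))
        = C (2*(n+1) : ℝ) * (C 2 * X * HP n) - C (2*(n+1) : ℝ) * HP (n+1) := by ring
    rw [h2]
    have hc : (C (2*(↑n+1+1) : ℝ)) = C 2 + C (2*(↑n+1) : ℝ) := by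
      rw [← C_add]; congr 1; ring
    push_cast
    rw [hc]
    ring

lemma twoX_mul (n : ℕ) : C 2 * X * HP n = HP (n+1) + C (2*n : ℝ) * HP (n - 1) := by
  cases n with
  | zero => simp [HP_one, HP_zero]
  | succ n => rw [HP_succ (n+1), HP_deriv n]; push_cast; ring

lemma gauss_hasDerivAt (n : ℕ) (x : ℝ) :
    HasDerivAt (fun t => (HP n).eval t * Real.exp (-t^2))
      (-((HP (n+1)).eval x * Real.exp (-x^2))) x := by
  have h1 : HasDerivAt (fun t : ℝ => Real.exp (-t^2)) (Real.exp (-x^2) * (-(2*x))) x := by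
    have := ((hasDerivAt_pow 2 x).neg).exp
    simpa [mul_comm] using this
  have h2 := (HP n).hasDerivAt x
  have := h2.mul h1
  refine HasDerivAt.congr_deriv this ?_
  simp [HP_succ, eval_mul]
  ring

lemma integrable_poly_gauss (Q : Polynomial ℝ) :
    Integrable fun x => Q.eval x * Real.exp (-x^2) := by
  have base : ∀ n : ℕ, Integrable fun x : ℝ => x^n * Real.exp (-x^2) := by
    intro n
    have h : (-1:ℝ) < n := by exact_mod_cast neg_one_lt_zero.trans_le (Nat.cast_nonneg n)
    have := integrable_rpow_mul_exp_neg_mul_sq (b := 1) one_pos (s := n) h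
    simp only [Real.rpow_natCast, neg_mul, one_mul] at this
    exact this
  have he : (fun x => Q.eval x * Real.exp (-x^2))
      = fun x => ∑ i ∈ Finset.range (Q.natDegree+1), Q.coeff i * (x^i * Real.exp (-x^2)) := by
    funext x
    rw [Polynomial.eval_eq_sum_range, Finset.sum_mul]
    exact Finset.sum_congr rfl fun i _ => by ring
  rw [he]
  exact integrable_finset_sum _ (fun i _ => (base i).const_mul _)

lemma ibp (a : ℕ) (Q : Polynomial ℝ) :
    ∫ x, (Q * HP (a+1)).eval x * Real.exp (-x^2)
      = ∫ x, (derivative Q * HP a).eval x * Real.exp (-x^2) := by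
  have key := integral_mul_deriv_eq_deriv_mul_of_integrable
    (u := fun t => Q.eval t) (v := fun t => (HP a).eval t * Real.exp (-t^2))
    (u' := fun t => (derivative Q).eval t)
    (v' := fun t => -((HP (a+1)).eval t * Real.exp (-t^2)))
    (fun x _ => Q.hasDerivAt x) (fun x _ => gauss_hasDerivAt a x)
    (by
      have h : ((fun t => Q.eval t) * fun t => -((HP (a+1)).eval t * Real.exp (-t^2)))
          = fun x => -((Q * HP (a+1)).eval x * Real.exp (-x^2)) := by
        funext x; simp [eval_mul]; ring
      rw [h]; exact (integrable_poly_gauss _).neg)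
    (by
      have h : ((fun t => (derivative Q).eval t) * fun t => (HP a).eval t * Real.exp (-t^2))
          = fun x => (derivative Q * HP a).eval x * Real.exp (-x^2) := by
        funext x; simp [eval_mul]; ring
      rw [h]; exact integrable_poly_gauss _)
    (by
      have h : ((fun t => Q.eval t) * fun t => (HP a).eval t * Real.exp (-t^2))
          = fun x => (Q * HP a).eval x * Real.exp (-x^2) := by
        funext x; simp [eval_mul]; ring
      rw [h]; exact integrable_poly_gauss _)
  have e1 : (∫ x, Q.eval x * -((HP (a+1)).eval x * Real.exp (-x^2)))
      = -∫ x, (Q * HP (a+1)).eval x * Real.exp (-x^2) := by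
    rw [← integral_neg]
    congr 1; funext x; simp [eval_mul]; ring
  have e2 : (∫ x, (derivative Q).eval x * ((HP a).eval x * Real.exp (-x^2)))
      = ∫ x, (derivative Q * HP a).eval x * Real.exp (-x^2) := by
    congr 1; funext x; simp [eval_mul]; ring
  rw [e1, e2] at key
  linarith [key]

lemma Lred (a : ℕ) : ∀ Q : Polynomial ℝ,
    ∫ x, (Q * HP a).eval x * Real.exp (-x^2)
      = ∫ x, ((⇑derivative)^[a] Q).eval x * Real.exp (-x^2) := by
  induction a with
  | zero => intro Q; simp [HP_zero]
  | succ a ih =>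
    intro Q
    rw [ibp a Q, ih (derivative Q), Function.iterate_succ_apply]

lemma iter_self (a : ℕ) : (⇑derivative)^[a] (HP a) = C ((2:ℝ)^a * a.factorial) := by
  induction a with
  | zero => simp [HP_zero]
  | succ a ih =>
    rw [Function.iterate_succ_apply, HP_deriv a, iterate_derivative_C_mul, ih, ← C_mul]
    congr 1
    rw [Nat.factorial_succ]
    push_cast
    ring

lemma iter_lt {a b : ℕ} (h : a < b) : (⇑derivative)^[b] (HP a) = 0 := by
  obtain ⟨c, rfl⟩ : ∃ c, b = c + (a+1) := ⟨b - (a+1), by omega⟩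
  rw [Function.iterate_add_apply]
  have h0 : (⇑derivative)^[a+1] (HP a) = 0 := by
    rw [Function.iterate_succ_apply', iter_self, derivative_C]
  rw [h0, iterate_derivative_zero]

lemma gauss_int : ∫ x : ℝ, Real.exp (-x^2) = Real.sqrt Real.pi := by
  simpa using integral_gaussian 1

lemma J_diag (a : ℕ) : ∫ x, (HP a * HP a).eval x * Real.exp (-x^2)
    = Real.sqrt Real.pi * ((2:ℝ)^a * a.factorial) := by
  rw [Lred a (HP a), iter_self]
  simp only [eval_C]
  rw [integral_const_mul, gauss_int]
  ring

lemma J_off {a b : ℕ} (h : a ≠ b) :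
    ∫ x, (HP a * HP b).eval x * Real.exp (-x^2) = 0 := by
  rcases lt_or_gt_of_ne h with hlt | hgt
  · rw [Lred b (HP a), iter_lt hlt]; simp
  · rw [mul_comm, Lred a (HP b), iter_lt hgt]; simp

def cc (k j m : ℕ) : ℕ := k.choose m * j.choose m * m.factorial * 2^m

lemma cc_rec (k j m : ℕ) (hm : m ≤ k+1) (hj : k+2 ≤ j) :
    cc (k+2) j (m+1) + 2*(k+1) * cc k j m
      = cc (k+1) j (m+1) + 2*(k+1+j-2*m) * cc (k+1) j m := by
  obtain ⟨a, ha⟩ : ∃ a, j = m + a := ⟨j - m, by omega⟩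
  obtain ⟨b, hb⟩ : ∃ b, k+1 = m + b := ⟨k+1-m, by omega⟩
  have hs3 : k+1+j-2*m = a + b := by omega
  have A2 : j.choose (m+1) * (m+1) = j.choose m * a := by
    rw [Nat.choose_succ_right_eq]; congr 1; omega
  have A34 : (k+1) * k.choose m = (k+1).choose m * b := by
    rw [Nat.add_one_mul_choose_eq, Nat.choose_succ_right_eq]; congr 1; omega
  have P : (k+2).choose (m+1) = (k+1).choose m + (k+1).choose (m+1) :=
    Nat.choose_succ_succ (k+1) m
  unfold cc
  rw [hs3, P, Nat.factorial_succ]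
  zify at A2 A34 ⊢
  linear_combination (((k+1).choose m : ℤ) * (m.factorial : ℤ) * 2^(m+1)) * A2
    + (2 * (j.choose m : ℤ) * (m.factorial : ℤ) * 2^m) * A34

lemma lin_le (j : ℕ) : ∀ k, k ≤ j →
    HP k * HP j = ∑ m ∈ range (k+1), C (cc k j m : ℝ) * HP (k + j - 2*m) := by
  intro k
  induction k using Nat.twoStepInduction with
  | zero => intro _; simp [HP_zero, cc]
  | one =>
    intro h1
    rw [Finset.sum_range_succ, Finset.sum_range_one]
    have e0 : ((cc 1 j 0 : ℕ) : ℝ) = 1 := by simp [cc]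
    have e1 : ((cc 1 j 1 : ℕ) : ℝ) = 2*(j:ℝ) := by
      simp [cc, Nat.choose_one_right]; ring
    have e2 : 1 + j - 2*1 = j - 1 := by omega
    have e3 : 1 + j - 2*0 = j + 1 := by omega
    rw [e0, e1, e2, e3, HP_one, twoX_mul j]
    rw [map_one, one_mul]
  | more n ih1 ih2 =>
    intro h
    have ihn := ih1 (by omega)
    have ihn1 := ih2 (by omega)
    have hrec : HP (n+2) = C 2 * X * HP (n+1) - C (2*(n+1) : ℝ) * HP n := by
      rw [HP_succ (n+1), HP_deriv n]
    have step1 : HP (n+2) * HP j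
        = (∑ m ∈ range (n+2), C (cc (n+1) j m : ℝ) * (C 2 * X * HP (n+1+j-2*m)))
          - ∑ m ∈ range (n+1), C (2*(n+1) : ℝ) * (C (cc n j m : ℝ) * HP (n+j-2*m)) := by
      calc HP (n+2) * HP j
          = C 2 * X * (HP (n+1) * HP j) - C (2*(n+1) : ℝ) * (HP n * HP j) := by
            rw [hrec]; ring
        _ = _ := by
            rw [ihn1, ihn, Finset.mul_sum, Finset.mul_sum]
            congr 1
            exact Finset.sum_congr rfl fun m _ => by ring
    have step2 : ∀ m ∈ range (n+2),
        C (cc (n+1) j m : ℝ) * (C 2 * X * HP (n+1+j-2*m))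
          = C (cc (n+1) j m : ℝ) * HP (n+2+j-2*m)
            + C (cc (n+1) j m : ℝ) * C (2*((n+1+j-2*m : ℕ)) : ℝ) * HP (n+j-2*m) := by
      intro m hm
      have hm' : m ≤ n+1 := Nat.lt_succ_iff.mp (Finset.mem_range.mp hm)
      have i1 : (n+1+j-2*m) + 1 = n+2+j-2*m := by omega
      have i2 : (n+1+j-2*m) - 1 = n+j-2*m := by omega
      rw [twoX_mul (n+1+j-2*m), i1, i2]
      ring
    have step3 : HP (n+2) * HP j
        = (∑ m ∈ range (n+2), C (cc (n+1) j m : ℝ) * HP (n+2+j-2*m))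
          + (∑ m ∈ range (n+2),
              C (cc (n+1) j m : ℝ) * C (2*((n+1+j-2*m : ℕ)) : ℝ) * HP (n+j-2*m))
          - ∑ m ∈ range (n+1), C (2*(n+1) : ℝ) * (C (cc n j m : ℝ) * HP (n+j-2*m)) := by
      rw [step1, Finset.sum_congr rfl step2, Finset.sum_add_distrib]
    have eA : (∑ m ∈ range (n+2), C (cc (n+1) j m : ℝ) * HP (n+2+j-2*m))
        = (∑ m ∈ range (n+2), C (cc (n+1) j (m+1) : ℝ) * HP (n+j-2*m)) + HP (n+2+j) := by
      rw [Finset.sum_range_succ' (fun m => C (cc (n+1) j m : ℝ) * HP (n+2+j-2*m)) (n+1)]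
      congr 1
      · have hz : ((cc (n+1) j (n+1+1) : ℕ) : ℝ) = 0 := by
          unfold cc; rw [Nat.choose_eq_zero_of_lt (by omega)]; simp
        rw [eq_comm, Finset.sum_range_succ, hz]
        simp only [map_zero, zero_mul, add_zero]
        apply Finset.sum_congr rfl
        intro m hm
        have hm' : m ≤ n := by
          have := Finset.mem_range.mp hm; omega
        have : n+2+j-2*(m+1) = n+j-2*m := by omega
        rw [this]
      · have : cc (n+1) j 0 = 1 := by simp [cc]
        rw [this]
        simp
    have eC : (∑ m ∈ range (n+1), C (2*(n+1) : ℝ) * (C (cc n j m : ℝ) * HP (n+j-2*m)))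
        = ∑ m ∈ range (n+2), C (2*(n+1) : ℝ) * (C (cc n j m : ℝ) * HP (n+j-2*m)) := by
      have hz : ((cc n j (n+1) : ℕ) : ℝ) = 0 := by
        unfold cc; rw [Nat.choose_eq_zero_of_lt (by omega)]; simp
      rw [eq_comm, Finset.sum_range_succ, hz]
      simp
    have eR : (∑ m ∈ range (n+3), C (cc (n+2) j m : ℝ) * HP (n+2+j-2*m))
        = (∑ m ∈ range (n+2), C (cc (n+2) j (m+1) : ℝ) * HP (n+j-2*m)) + HP (n+2+j) := by
      rw [Finset.sum_range_succ' (fun m => C (cc (n+2) j m : ℝ) * HP (n+2+j-2*m)) (n+2)]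
      congr 1
      · apply Finset.sum_congr rfl
        intro m hm
        have hm' : m ≤ n+1 := by
          have := Finset.mem_range.mp hm; omega
        have : n+2+j-2*(m+1) = n+j-2*m := by omega
        rw [this]
      · have : cc (n+2) j 0 = 1 := by simp [cc]
        rw [this]
        simp
    have final : ∑ m ∈ range (n+2),
        (C (cc (n+1) j (m+1) : ℝ) * HP (n+j-2*m)
          + C (cc (n+1) j m : ℝ) * C (2*((n+1+j-2*m : ℕ)) : ℝ) * HP (n+j-2*m)
          - C (2*(n+1) : ℝ) * (C (cc n j m : ℝ) * HP (n+j-2*m)))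
        = ∑ m ∈ range (n+2), C (cc (n+2) j (m+1) : ℝ) * HP (n+j-2*m) := by
      apply Finset.sum_congr rfl
      intro m hm
      have hm' : m ≤ n+1 := by
        have := Finset.mem_range.mp hm; omega
      have h2m : 2*m ≤ n+1+j := by omega
      have hcast : ((n+1+j-2*m : ℕ) : ℝ) = (n:ℝ)+1+(j:ℝ)-2*(m:ℝ) := by
        rw [Nat.cast_sub h2m]; push_cast; ring
      have hcc := cc_rec n j m hm' h
      have hccR : ((cc (n+2) j (m+1) : ℕ) : ℝ) + 2*((n:ℝ)+1) * (cc n j m : ℕ)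
          = ((cc (n+1) j (m+1) : ℕ) : ℝ)
            + 2*((n:ℝ)+1+(j:ℝ)-2*(m:ℝ)) * ((cc (n+1) j m : ℕ) : ℝ) := by
        have := congrArg (fun t : ℕ => (t : ℝ)) hcc
        push_cast at this
        rw [hcast] at this
        push_cast at this ⊢
        linarith
      have hC : C ((cc (n+1) j (m+1) : ℕ) : ℝ)
            + C ((cc (n+1) j m : ℕ) : ℝ) * C (2*((n+1+j-2*m : ℕ)) : ℝ)
            - C (2*(n+1) : ℝ) * C ((cc n j m : ℕ) : ℝ)
          = C ((cc (n+2) j (m+1) : ℕ) : ℝ) := by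
        rw [← C_mul, ← C_mul, ← C_add, ← C_sub]
        congr 1
        rw [hcast]
        push_cast
        linarith
      linear_combination hC * HP (n+j-2*m)
    rw [step3, eA, eC, eR, ← final, Finset.sum_sub_distrib, Finset.sum_add_distrib]
    ring

lemma cc_comm (k j m : ℕ) : cc j k m = cc k j m := by unfold cc; ring

lemma lin_all (k j : ℕ) :
    HP k * HP j = ∑ m ∈ range (k+1), C (cc k j m : ℝ) * HP (k + j - 2*m) := by
  rcases le_or_gt k j with h | h
  · exact lin_le j k h
  · have h0 := lin_le k j h.le
    rw [mul_comm, h0]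
    have hcong : ∑ m ∈ range (j+1), C (cc j k m : ℝ) * HP (j + k - 2*m)
        = ∑ m ∈ range (j+1), C (cc k j m : ℝ) * HP (k + j - 2*m) := by
      apply Finset.sum_congr rfl
      intro m _
      rw [cc_comm, Nat.add_comm j k]
    rw [hcong]
    apply Finset.sum_subset (Finset.range_subset_range.mpr (by omega))
    intro m hm hnot
    have hj : j < m := by
      have := Finset.mem_range.mp hm
      simp only [Finset.mem_range, not_lt] at hnot
      omega
    have hz : ((cc k j m : ℕ) : ℝ) = 0 := by
      unfold cc; rw [Nat.choose_eq_zero_of_lt hj]; simp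
    rw [hz, map_zero, zero_mul]

lemma choose_le_two_pow (n k : ℕ) : n.choose k ≤ 2^n := by
  rcases le_or_gt k n with h | h
  · calc n.choose k ≤ ∑ i ∈ Finset.range (n+1), n.choose i :=
        Finset.single_le_sum (fun i _ => Nat.zero_le _) (Finset.mem_range.mpr (by omega))
      _ = 2^n := Nat.sum_range_choose n
  · rw [Nat.choose_eq_zero_of_lt h]; exact Nat.zero_le _

lemma nat_bound (k j m : ℕ) (hk : m ≤ k) (hj : m ≤ j) :
    cc k j m ^ 2 * (2^(k+j-2*m) * (k+j-2*m).factorial)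
      ≤ k.factorial * j.factorial * 8^(k+j) := by
  obtain ⟨a, rfl⟩ : ∃ a, k = m + a := ⟨k-m, by omega⟩
  obtain ⟨b, rfl⟩ : ∃ b, j = m + b := ⟨j-m, by omega⟩
  have hidx : m+a+(m+b)-2*m = a+b := by omega
  rw [hidx]
  have f1 : (m+a).choose m * m.factorial * a.factorial = (m+a).factorial := by
    have := Nat.choose_mul_factorial_mul_factorial (show m ≤ m+a by omega)
    simpa using this
  have f2 : (m+b).choose m * m.factorial * b.factorial = (m+b).factorial := by
    have := Nat.choose_mul_factorial_mul_factorial (show m ≤ m+b by omega)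
    simpa using this
  have e : (a+b).factorial = (a+b).choose a * a.factorial * b.factorial := by
    have := Nat.choose_mul_factorial_mul_factorial (show a ≤ a+b by omega)
    simpa using this.symm
  have key : cc (m+a) (m+b) m ^ 2 * (2^(a+b) * (a+b).factorial)
      = ((m+a).factorial * (m+b).factorial)
        * (((m+a).choose m * (m+b).choose m * (a+b).choose a) * 2^(2*m+(a+b))) := by
    unfold cc
    rw [e, ← f1, ← f2, pow_add, two_mul, pow_add, pow_add]
    ring
  rw [key]
  apply Nat.mul_le_mul_left
  calc ((m+a).choose m * (m+b).choose m * (a+b).choose a) * 2^(2*m+(a+b))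
      ≤ (2^(m+a) * 2^(m+b) * 2^(a+b)) * 2^(2*m+(a+b)) := by
        apply Nat.mul_le_mul_right
        exact Nat.mul_le_mul (Nat.mul_le_mul (choose_le_two_pow _ _) (choose_le_two_pow _ _))
          (choose_le_two_pow _ _)
    _ ≤ 8^(m+a+(m+b)) := by
        rw [show (8:ℕ) = 2^3 by norm_num, ← pow_mul, ← pow_add, ← pow_add, ← pow_add]
        exact Nat.pow_le_pow_right (by norm_num) (by omega)

end HermiteAux

open HermiteAux Polynomial MeasureTheory Finset in
lemma physHermite_eq_HP (m : ℕ) (x : ℝ) : physHermite m x = (HP m).eval x := by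
  have iter_gauss : ∀ m : ℕ, iteratedDeriv m (fun t : ℝ => Real.exp (-t ^ 2))
      = fun x => (-1:ℝ)^m * ((HP m).eval x * Real.exp (-x^2)) := by
    intro m
    induction m with
    | zero => funext x; simp [HP_zero]
    | succ m ih =>
      funext x
      rw [iteratedDeriv_succ, ih]
      have hd := ((gauss_hasDerivAt m x).const_mul ((-1:ℝ)^m)).deriv
      rw [hd]
      ring
  unfold physHermite
  rw [iter_gauss]
  have h1 : ((-1:ℝ)^m) * ((-1:ℝ)^m) = 1 := by
    rw [← pow_add]; exact Even.neg_one_pow ⟨m, rfl⟩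
  have h2 : Real.exp (x^2) * Real.exp (-x^2) = 1 := by
    rw [← Real.exp_add]; simp
  calc (-1:ℝ)^m * Real.exp (x^2) * ((-1:ℝ)^m * ((HP m).eval x * Real.exp (-x^2)))
      = (((-1:ℝ)^m) * ((-1:ℝ)^m)) * (Real.exp (x^2) * Real.exp (-x^2)) * (HP m).eval x := by
        ring
    _ = (HP m).eval x := by rw [h1, h2]; ring

/-- Lemma `hermitenielsen`:
`∫ H_k(x)² H_j(x)² e^{-x²} dx ≤ √π (k+1)! j! 8^{k+j}`. -/
theorem hermite_product_norm_bound (k j : ℕ) :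
    (∫ x : ℝ, physHermite k x ^ 2 * physHermite j x ^ 2 * Real.exp (-x ^ 2)) ≤
      Real.sqrt Real.pi * ((k + 1).factorial : ℝ) * (j.factorial : ℝ) * 8 ^ (k + j) := by
  classical
  open HermiteAux Polynomial Finset in
  have h1 : ∀ x : ℝ, physHermite k x ^ 2 * physHermite j x ^ 2 * Real.exp (-x ^ 2)
      = ∑ m ∈ range (k+1), ∑ m' ∈ range (k+1),
          ((cc k j m : ℝ) * (cc k j m' : ℝ))
            * ((HP (k+j-2*m) * HP (k+j-2*m')).eval x * Real.exp (-x^2)) := by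
    intro x
    rw [physHermite_eq_HP, physHermite_eq_HP]
    have hS : (HP k).eval x * (HP j).eval x
        = ∑ m ∈ range (k+1), (cc k j m : ℝ) * (HP (k+j-2*m)).eval x := by
      rw [← eval_mul, lin_all k j]
      rw [eval_finset_sum]
      exact Finset.sum_congr rfl fun m _ => by rw [eval_mul, eval_C]
    calc (HP k).eval x ^ 2 * (HP j).eval x ^ 2 * Real.exp (-x ^ 2)
        = ((HP k).eval x * (HP j).eval x) * ((HP k).eval x * (HP j).eval x)
            * Real.exp (-x^2) := by ring
      _ = (∑ m ∈ range (k+1), (cc k j m : ℝ) * (HP (k+j-2*m)).eval x)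
            * (∑ m' ∈ range (k+1), (cc k j m' : ℝ) * (HP (k+j-2*m')).eval x)
            * Real.exp (-x^2) := by rw [hS]
      _ = ∑ m ∈ range (k+1), ∑ m' ∈ range (k+1),
            ((cc k j m : ℝ) * (HP (k+j-2*m)).eval x)
              * ((cc k j m' : ℝ) * (HP (k+j-2*m')).eval x) * Real.exp (-x^2) := by
          rw [Finset.sum_mul_sum, Finset.sum_mul]
          exact Finset.sum_congr rfl fun m _ => by rw [Finset.sum_mul]
      _ = _ := by
          refine Finset.sum_congr rfl fun m _ => Finset.sum_congr rfl fun m' _ => ?_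
          rw [eval_mul]; ring
  open HermiteAux Polynomial MeasureTheory Finset in
  have h2 : (∫ x : ℝ, physHermite k x ^ 2 * physHermite j x ^ 2 * Real.exp (-x ^ 2))
      = ∑ m ∈ range (k+1), ∑ m' ∈ range (k+1),
          ((cc k j m : ℝ) * (cc k j m' : ℝ))
            * ∫ x : ℝ, (HP (k+j-2*m) * HP (k+j-2*m')).eval x * Real.exp (-x^2) := by
    calc (∫ x : ℝ, physHermite k x ^ 2 * physHermite j x ^ 2 * Real.exp (-x ^ 2))
        = ∫ x : ℝ, ∑ m ∈ range (k+1), ∑ m' ∈ range (k+1),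
            ((cc k j m : ℝ) * (cc k j m' : ℝ))
              * ((HP (k+j-2*m) * HP (k+j-2*m')).eval x * Real.exp (-x^2)) := by
          congr 1; funext x; exact h1 x
      _ = ∑ m ∈ range (k+1), ∫ x : ℝ, ∑ m' ∈ range (k+1),
            ((cc k j m : ℝ) * (cc k j m' : ℝ))
              * ((HP (k+j-2*m) * HP (k+j-2*m')).eval x * Real.exp (-x^2)) := by
          refine integral_finset_sum _ fun m _ => ?_
          exact integrable_finset_sum _ fun m' _ => (integrable_poly_gauss _).const_mul _
      _ = ∑ m ∈ range (k+1), ∑ m' ∈ range (k+1), ∫ x : ℝ,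
            ((cc k j m : ℝ) * (cc k j m' : ℝ))
              * ((HP (k+j-2*m) * HP (k+j-2*m')).eval x * Real.exp (-x^2)) := by
          refine Finset.sum_congr rfl fun m _ => ?_
          exact integral_finset_sum _ fun m' _ => (integrable_poly_gauss _).const_mul _
      _ = _ := by
          refine Finset.sum_congr rfl fun m _ => Finset.sum_congr rfl fun m' _ => ?_
          exact integral_const_mul _ _
  open HermiteAux Polynomial MeasureTheory Finset in
  have h3 : ∀ m ∈ range (k+1),
      (∑ m' ∈ range (k+1), ((cc k j m : ℝ) * (cc k j m' : ℝ))
          * ∫ x : ℝ, (HP (k+j-2*m) * HP (k+j-2*m')).eval x * Real.exp (-x^2))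
        = Real.sqrt Real.pi
            * ((cc k j m : ℝ)^2 * ((2:ℝ)^(k+j-2*m) * (k+j-2*m).factorial)) := by
    intro m hm
    rw [Finset.sum_eq_single m]
    · rw [J_diag]; ring
    · intro m' hm' hne
      by_cases hc : cc k j m = 0
      · simp [hc]
      by_cases hc' : cc k j m' = 0
      · simp [hc']
      have hmj : m ≤ j := by
        by_contra hh
        exact hc (by unfold cc; rw [Nat.choose_eq_zero_of_lt (show j < m by omega)]; ring)
      have hm'j : m' ≤ j := by
        by_contra hh
        exact hc' (by unfold cc; rw [Nat.choose_eq_zero_of_lt (show j < m' by omega)]; ring)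
      have hmk : m ≤ k := by have := Finset.mem_range.mp hm; omega
      have hm'k : m' ≤ k := by have := Finset.mem_range.mp hm'; omega
      have hne2 : k+j-2*m ≠ k+j-2*m' := by omega
      rw [J_off hne2, mul_zero]
    · intro hnm; exact absurd hm hnm
  open HermiteAux Polynomial MeasureTheory Finset in
  calc (∫ x : ℝ, physHermite k x ^ 2 * physHermite j x ^ 2 * Real.exp (-x ^ 2))
      = ∑ m ∈ range (k+1), Real.sqrt Real.pi
          * ((cc k j m : ℝ)^2 * ((2:ℝ)^(k+j-2*m) * (k+j-2*m).factorial)) := by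
        rw [h2]; exact Finset.sum_congr rfl h3
    _ ≤ ∑ m ∈ range (k+1), Real.sqrt Real.pi
          * ((k.factorial * j.factorial * 8^(k+j) : ℕ) : ℝ) := by
        refine Finset.sum_le_sum fun m hm => ?_
        have hmk : m ≤ k := by have := Finset.mem_range.mp hm; omega
        have hnat : cc k j m ^ 2 * (2^(k+j-2*m) * (k+j-2*m).factorial)
            ≤ k.factorial * j.factorial * 8^(k+j) := by
          rcases le_or_gt m j with hmj | hmj
          · exact nat_bound k j m hmk hmj
          · have hz : cc k j m = 0 := by
              unfold cc; rw [Nat.choose_eq_zero_of_lt (show j < m from hmj)]; ring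
            rw [hz]
            simpa using Nat.zero_le _
        have hcast : ((cc k j m : ℝ)^2 * ((2:ℝ)^(k+j-2*m) * (k+j-2*m).factorial))
            = ((cc k j m ^ 2 * (2^(k+j-2*m) * (k+j-2*m).factorial) : ℕ) : ℝ) := by
          push_cast; ring
        rw [hcast]
        exact mul_le_mul_of_nonneg_left (Nat.cast_le.mpr hnat) (Real.sqrt_nonneg _)
    _ = (k+1) * (Real.sqrt Real.pi * ((k.factorial * j.factorial * 8^(k+j) : ℕ) : ℝ)) := by
        rw [Finset.sum_const, Finset.card_range, nsmul_eq_mul]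
        push_cast
        ring
    _ = Real.sqrt Real.pi * ((k + 1).factorial : ℝ) * (j.factorial : ℝ) * 8 ^ (k + j) := by
        rw [Nat.factorial_succ]
        push_cast
        ring
end

section
/- Let B_n = ∏_{i=1}^d [−σ_i √(log n/(d²/4 + d + 1)), σ_i √(log n/(d²/4 + d + 1))]. Then the probability of the event { #{j ∈ {1, …, n} : x_j ∉ B_n} ≤ 3d · n^{1 − 2/(d+2)²} } tends to 1 as n → ∞; that is, with high probability at most O(n^{1 − 2/(d+2)²}) of the n Gaussian sample points fall outside the bulk region B_n. -/
open MeasureTheory ProbabilityTheory Filter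
open scoped ENNReal NNReal BigOperators

section TailAux

open Real Set

lemma gauss_tail_Ioi (σi : ℝ) (hσ : 0 < σi) (t : ℝ) (ht : 0 < t) :
    gaussianReal 0 (Real.toNNReal (σi ^ 2)) (Set.Ioi (σi * t))
      ≤ ENNReal.ofReal (1 / t * Real.exp (-(t ^ 2 / 2))) := by
  set v : ℝ≥0 := Real.toNNReal (σi ^ 2) with hv_def
  have hv : v ≠ 0 := by
    simp only [hv_def, ne_eq, Real.toNNReal_eq_zero, not_le]
    positivity
  have hvr : (v : ℝ) = σi ^ 2 := Real.coe_toNNReal _ (sq_nonneg _)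
  set a := σi * t with ha_def
  have ha : 0 < a := mul_pos hσ ht
  set k := t / (2 * σi) with hk_def
  have hk : 0 < k := by positivity
  rw [gaussianReal_apply_eq_integral 0 hv]
  apply ENNReal.ofReal_le_ofReal
  have h2 : (2 : ℝ) ≤ Real.sqrt (2 * π) := by
    nlinarith [Real.sq_sqrt (by positivity : (0:ℝ) ≤ 2 * π), Real.sqrt_nonneg (2 * π),
      Real.pi_gt_three]
  have hsq : Real.sqrt (2 * π * σi ^ 2) = Real.sqrt (2 * π) * σi := by
    rw [Real.sqrt_mul (by positivity), Real.sqrt_sq hσ.le]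
  calc ∫ x in Ioi a, gaussianPDFReal 0 v x
      ≤ ∫ x in Ioi a, (Real.sqrt (2 * π * σi ^ 2))⁻¹ * Real.exp (-k * x) := by
        refine setIntegral_mono_on (integrable_gaussianPDFReal 0 v).integrableOn
          ((exp_neg_integrableOn_Ioi a hk).const_mul _) measurableSet_Ioi ?_
        intro x hx
        rw [Set.mem_Ioi] at hx
        have hx0 : 0 < x := ha.trans hx
        rw [gaussianPDFReal, hvr, sub_zero]
        refine mul_le_mul_of_nonneg_left ?_ (by positivity)
        rw [Real.exp_le_exp, hk_def]
        have key : x * a ≤ x * x := by nlinarith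
        rw [ha_def] at key
        have hrw : -(t / (2 * σi)) * x = -(σi * t * x) / (2 * σi ^ 2) := by
          field_simp
        rw [hrw, div_le_div_iff_of_pos_right (by positivity : (0:ℝ) < 2 * σi ^ 2)]
        nlinarith
    _ = (Real.sqrt (2 * π * σi ^ 2))⁻¹ * (k⁻¹ * Real.exp (-(k * a))) := by
        rw [MeasureTheory.integral_const_mul]
        congr 1
        have := integral_comp_mul_left_Ioi (fun x => Real.exp (-x)) a hk
        simp only [neg_mul] at this ⊢
        rw [this, integral_exp_neg_Ioi, smul_eq_mul]
    _ ≤ 1 / t * Real.exp (-(t ^ 2 / 2)) := by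
        have hka : k * a = t ^ 2 / 2 := by
          rw [hk_def, ha_def]; field_simp
        rw [hka]
        have hcoef : (Real.sqrt (2 * π * σi ^ 2))⁻¹ * k⁻¹ ≤ 1 / t := by
          have hkinv : k⁻¹ = 2 * σi / t := by rw [hk_def, inv_div]
          rw [hsq, hkinv, mul_inv]
          have hs : (Real.sqrt (2 * π))⁻¹ ≤ 2⁻¹ := inv_anti₀ (by norm_num) h2
          calc (Real.sqrt (2 * π))⁻¹ * σi⁻¹ * (2 * σi / t)
              ≤ 2⁻¹ * σi⁻¹ * (2 * σi / t) := by gcongr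
            _ = 1 / t := by field_simp
        calc (Real.sqrt (2 * π * σi ^ 2))⁻¹ * (k⁻¹ * Real.exp (-(t ^ 2 / 2)))
            = ((Real.sqrt (2 * π * σi ^ 2))⁻¹ * k⁻¹) * Real.exp (-(t ^ 2 / 2)) := by ring
          _ ≤ 1 / t * Real.exp (-(t ^ 2 / 2)) :=
            mul_le_mul_of_nonneg_right hcoef (Real.exp_pos _).le

lemma gauss_tail_abs (σi : ℝ) (hσ : 0 < σi) (t : ℝ) (ht : 0 < t) :
    gaussianReal 0 (Real.toNNReal (σi ^ 2)) {y : ℝ | σi * t < |y|}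
      ≤ ENNReal.ofReal (2 / t * Real.exp (-(t ^ 2 / 2))) := by
  set v : ℝ≥0 := Real.toNNReal (σi ^ 2) with hv_def
  have hv : v ≠ 0 := by
    simp only [hv_def, ne_eq, Real.toNNReal_eq_zero, not_le]
    positivity
  set a := σi * t with ha_def
  have ha : 0 < a := mul_pos hσ ht
  have hset : {y : ℝ | a < |y|} = Set.Ioi a ∪ Set.Iio (-a) := by
    ext y
    simp only [Set.mem_setOf_eq, Set.mem_union, Set.mem_Ioi, Set.mem_Iio, lt_abs, lt_neg]
  have hmap : (gaussianReal 0 v).map (fun y => (-1 : ℝ) * y) = gaussianReal 0 v := by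
    rw [gaussianReal_map_const_mul]
    norm_num
  have hIio : gaussianReal 0 v (Set.Iio (-a)) = gaussianReal 0 v (Set.Ioi a) := by
    conv_lhs => rw [← hmap]
    rw [Measure.map_apply (measurable_const_mul _) measurableSet_Iio]
    congr 1
    ext y
    simp only [Set.mem_preimage, Set.mem_Iio, Set.mem_Ioi]
    constructor <;> intro h <;> linarith
  calc gaussianReal 0 v {y : ℝ | a < |y|}
      ≤ gaussianReal 0 v (Set.Ioi a) + gaussianReal 0 v (Set.Iio (-a)) := by
        rw [hset]; exact measure_union_le _ _
    _ ≤ ENNReal.ofReal (1 / t * Real.exp (-(t ^ 2 / 2)))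
        + ENNReal.ofReal (1 / t * Real.exp (-(t ^ 2 / 2))) := by
        rw [hIio]
        exact add_le_add (gauss_tail_Ioi σi hσ t ht) (gauss_tail_Ioi σi hσ t ht)
    _ = ENNReal.ofReal (2 / t * Real.exp (-(t ^ 2 / 2))) := by
        rw [← ENNReal.ofReal_add (by positivity) (by positivity)]
        congr 1
        ring

lemma gaussPi_tail (d : ℕ) (σ : Fin d → ℝ) (hσ : ∀ i, 0 < σ i) (t : ℝ) (ht : 0 < t) :
    gaussPi d σ {x : Fin d → ℝ | ¬ ∀ i, |x i| ≤ σ i * t}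
      ≤ d * ENNReal.ofReal (2 / t * Real.exp (-(t ^ 2 / 2))) := by
  have hset : {x : Fin d → ℝ | ¬ ∀ i, |x i| ≤ σ i * t}
      = ⋃ i, Function.eval i ⁻¹' {y : ℝ | σ i * t < |y|} := by
    ext x
    simp [not_forall, not_le, Function.eval]
  rw [gaussPi, hset]
  refine le_trans (measure_iUnion_le _) ?_
  rw [tsum_fintype]
  have hone : ∀ i : Fin d,
      Measure.pi (fun i => gaussianReal 0 (Real.toNNReal (σ i ^ 2)))
        (Function.eval i ⁻¹' {y : ℝ | σ i * t < |y|})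
      ≤ ENNReal.ofReal (2 / t * Real.exp (-(t ^ 2 / 2))) := by
    intro i
    rw [Set.eval_preimage, Measure.pi_pi]
    rw [Finset.prod_eq_single i
      (fun j _ hj => by rw [Function.update_of_ne hj]; exact measure_univ)
      (fun h => absurd (Finset.mem_univ i) h)]
    rw [Function.update_self]
    exact gauss_tail_abs (σ i) (hσ i) t ht
  calc ∑ i : Fin d, Measure.pi (fun i => gaussianReal 0 (Real.toNNReal (σ i ^ 2)))
        (Function.eval i ⁻¹' {y : ℝ | σ i * t < |y|})
      ≤ ∑ _i : Fin d, ENNReal.ofReal (2 / t * Real.exp (-(t ^ 2 / 2))) :=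
        Finset.sum_le_sum fun i _ => hone i
    _ = d * ENNReal.ofReal (2 / t * Real.exp (-(t ^ 2 / 2))) := by
        simp [Finset.sum_const, nsmul_eq_mul]

end TailAux

/-- with probability tending to one, at most `3d·n^{1-2/(d+2)²}` of the `n`
Gaussian sample points fall outside the bulk region
`B_n = ∏ [-σ_i √(log n/(d²/4+d+1)), σ_i √(log n/(d²/4+d+1))]`. -/
theorem tail_points_count
    (d : ℕ) (hd : 0 < d) (σ : Fin d → ℝ) (hσ : ∀ i, 0 < σ i)
    {Ω : Type*} [MeasurableSpace Ω] (μ : Measure Ω) [IsProbabilityMeasure μ]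
    (X : ℕ → Ω → (Fin d → ℝ)) (hXmeas : ∀ j, Measurable (X j))
    (hXindep : iIndepFun X μ)
    (hXdist : ∀ j, μ.map (X j) = gaussPi d σ) :
    Tendsto (fun n : ℕ =>
        μ {ω | ((Finset.univ.filter fun j : Fin n =>
              ¬ ∀ i, |X j ω i| ≤
                σ i * Real.sqrt (Real.log n / ((d : ℝ) ^ 2 / 4 + d + 1))).card : ℝ) ≤
            3 * d * (n : ℝ) ^ (1 - 2 / ((d : ℝ) + 2) ^ 2)})
      atTop (nhds 1) := by
  classical
  set c : ℝ := (d : ℝ) ^ 2 / 4 + d + 1 with hc_def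
  have hc : 0 < c := by positivity
  set β : ℝ := 2 / ((d : ℝ) + 2) ^ 2 with hβ_def
  have hdpos : (0:ℝ) < d := by exact_mod_cast hd
  -- the tail set in ℝ^d and its measurability
  have hT : ∀ t : ℝ, MeasurableSet {x : Fin d → ℝ | ¬ ∀ i, |x i| ≤ σ i * t} := by
    intro t
    have : {x : Fin d → ℝ | ¬ ∀ i, |x i| ≤ σ i * t}
        = (⋂ i, {x : Fin d → ℝ | |x i| ≤ σ i * t})ᶜ := by
      ext x; simp
    rw [this]
    exact (MeasurableSet.iInter fun i =>
      measurableSet_le ((measurable_pi_apply i).abs) measurable_const).compl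
  -- measurability of the counting function (as an ℝ-valued function)
  have hcountR : ∀ (n : ℕ) (t : ℝ),
      Measurable (fun ω => ((Finset.univ.filter fun j : Fin n =>
        ¬ ∀ i, |X j ω i| ≤ σ i * t).card : ℝ)) := by
    intro n t
    have heq : (fun ω => ((Finset.univ.filter fun j : Fin n =>
        ¬ ∀ i, |X j ω i| ≤ σ i * t).card : ℝ))
        = fun ω => ∑ j : Fin n, if ¬ ∀ i, |X j ω i| ≤ σ i * t then (1:ℝ) else 0 := by
      ext ω
      rw [Finset.card_filter, Nat.cast_sum]
      exact Finset.sum_congr rfl fun j _ => by split <;> simp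
    rw [heq]
    exact Finset.measurable_sum _ fun j _ =>
      Measurable.ite (hXmeas j (hT t)) measurable_const measurable_const
  have hEmeas : ∀ n : ℕ, MeasurableSet {ω | ((Finset.univ.filter fun j : Fin n =>
      ¬ ∀ i, |X j ω i| ≤ σ i * Real.sqrt (Real.log n / c)).card : ℝ)
        ≤ 3 * d * (n : ℝ) ^ (1 - β)} := fun n =>
    measurableSet_le (hcountR n _) measurable_const
  -- the key estimate
  have key : ∀ n : ℕ, 2 ≤ n →
      μ {ω | ((Finset.univ.filter fun j : Fin n =>
          ¬ ∀ i, |X j ω i| ≤ σ i * Real.sqrt (Real.log n / c)).card : ℝ)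
            ≤ 3 * d * (n : ℝ) ^ (1 - β)}ᶜ
        ≤ ENNReal.ofReal (2 / Real.sqrt (Real.log n / c)) := by
    intro n hn
    have hn1 : (1:ℝ) < n := by exact_mod_cast hn.trans_lt' one_lt_two
    have hn0 : (0:ℝ) < n := by linarith
    have hlog : 0 < Real.log n := Real.log_pos hn1
    set t : ℝ := Real.sqrt (Real.log n / c) with ht_def
    have ht : 0 < t := Real.sqrt_pos.mpr (by positivity)
    set A : Fin n → Set Ω :=
      fun j => X j ⁻¹' {x : Fin d → ℝ | ¬ ∀ i, |x i| ≤ σ i * t} with hA_def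
    have hA : ∀ j, MeasurableSet (A j) := fun j => hXmeas j (hT t)
    set f : Ω → ℝ≥0∞ :=
      fun ω => ∑ j : Fin n, Set.indicator (A j) (fun _ => (1:ℝ≥0∞)) ω with hf_def
    have hcount : ∀ ω, ((Finset.univ.filter fun j : Fin n =>
        ¬ ∀ i, |X j ω i| ≤ σ i * t).card : ℝ≥0∞) = f ω := by
      intro ω
      rw [hf_def]
      simp only [Finset.card_filter, Nat.cast_sum]
      refine Finset.sum_congr rfl fun j _ => ?_
      by_cases h : ¬ ∀ i, |X j ω i| ≤ σ i * t
      · rw [if_pos h, Set.indicator_of_mem (by exact h), Nat.cast_one]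
      · rw [if_neg h, Set.indicator_of_notMem (by exact h), Nat.cast_zero]
    have hf_meas : Measurable f :=
      Finset.measurable_sum _ fun j _ => measurable_const.indicator (hA j)
    have hlint : ∫⁻ ω, f ω ∂μ = ∑ j : Fin n, μ (A j) := by
      rw [hf_def, lintegral_finset_sum _ fun j _ => measurable_const.indicator (hA j)]
      exact Finset.sum_congr rfl fun j _ => lintegral_indicator_one (hA j)
    have hAj : ∀ j : Fin n,
        μ (A j) ≤ d * ENNReal.ofReal (2 / t * Real.exp (-(t ^ 2 / 2))) := by
      intro j
      rw [hA_def]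
      have := Measure.map_apply (μ := μ) (hXmeas (j : ℕ)) (hT t)
      rw [hXdist j] at this
      rw [← this]
      exact gaussPi_tail d σ hσ t ht
    set ε : ℝ≥0∞ := ENNReal.ofReal (3 * d * (n : ℝ) ^ (1 - β)) with hε_def
    have hy : (0:ℝ) < 3 * d * (n : ℝ) ^ (1 - β) := by positivity
    have hε0 : ε ≠ 0 := (ENNReal.ofReal_pos.mpr hy).ne'
    have hεtop : ε ≠ ∞ := ENNReal.ofReal_ne_top
    have hsub : {ω | ((Finset.univ.filter fun j : Fin n =>
        ¬ ∀ i, |X j ω i| ≤ σ i * t).card : ℝ) ≤ 3 * d * (n : ℝ) ^ (1 - β)}ᶜ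
          ⊆ {ω | ε ≤ f ω} := by
      intro ω hω
      simp only [Set.mem_compl_iff, Set.mem_setOf_eq, not_le] at hω
      calc ε ≤ ENNReal.ofReal ((Finset.univ.filter fun j : Fin n =>
            ¬ ∀ i, |X j ω i| ≤ σ i * t).card : ℝ) := ENNReal.ofReal_le_ofReal hω.le
        _ = ((Finset.univ.filter fun j : Fin n =>
            ¬ ∀ i, |X j ω i| ≤ σ i * t).card : ℝ≥0∞) := ENNReal.ofReal_natCast _
        _ = f ω := hcount ω
    have hmarkov : μ {ω | ε ≤ f ω} ≤ (∫⁻ ω, f ω ∂μ) / ε := by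
      rw [ENNReal.le_div_iff_mul_le (Or.inl hε0) (Or.inl hεtop), mul_comm]
      exact mul_meas_ge_le_lintegral₀ hf_meas.aemeasurable ε
    -- identify the exponential with a power of n
    have ht2 : t ^ 2 = Real.log n / c := Real.sq_sqrt (by positivity)
    have hexp : Real.exp (-(t ^ 2 / 2)) = (n : ℝ) ^ (-β) := by
      rw [Real.rpow_def_of_pos hn0, ht2]
      congr 1
      rw [hβ_def, hc_def]
      field_simp
      ring
    have hnn : (n:ℝ) ^ ((1:ℝ) - β) = (n:ℝ) * (n:ℝ) ^ (-β) := by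
      rw [sub_eq_add_neg, Real.rpow_add hn0, Real.rpow_one]
    have hsum : ∑ j : Fin n, μ (A j)
        ≤ ENNReal.ofReal ((n:ℝ) * ((d:ℝ) * (2 / t * (n:ℝ) ^ (-β)))) := by
      calc ∑ j : Fin n, μ (A j)
          ≤ ∑ _j : Fin n, (d : ℝ≥0∞) * ENNReal.ofReal (2 / t * Real.exp (-(t ^ 2 / 2))) :=
            Finset.sum_le_sum fun j _ => hAj j
        _ = (n : ℝ≥0∞) * ((d : ℝ≥0∞) * ENNReal.ofReal (2 / t * (n:ℝ) ^ (-β))) := by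
            rw [hexp, Finset.sum_const, Finset.card_univ, Fintype.card_fin, nsmul_eq_mul]
        _ = ENNReal.ofReal ((n:ℝ) * ((d:ℝ) * (2 / t * (n:ℝ) ^ (-β)))) := by
            have h1 : ENNReal.ofReal ((n:ℝ) * ((d:ℝ) * (2 / t * (n:ℝ) ^ (-β))))
                = ENNReal.ofReal (n:ℝ)
                  * (ENNReal.ofReal (d:ℝ) * ENNReal.ofReal (2 / t * (n:ℝ) ^ (-β))) := by
              rw [ENNReal.ofReal_mul (by positivity : (0:ℝ) ≤ (n:ℝ))]
              rw [ENNReal.ofReal_mul (by positivity : (0:ℝ) ≤ (d:ℝ))]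
            rw [h1, ENNReal.ofReal_natCast, ENNReal.ofReal_natCast]
    have hfrac : ((n:ℝ) * ((d:ℝ) * (2 / t * (n:ℝ) ^ (-β)))) / (3 * d * (n : ℝ) ^ (1 - β))
        ≤ 2 / t := by
      have hnb : (0:ℝ) < (n:ℝ) ^ (-β) := Real.rpow_pos_of_pos hn0 _
      rw [hnn]
      rw [div_le_div_iff₀ (by positivity) ht]
      have : (n:ℝ) * ((d:ℝ) * (2 / t * (n:ℝ) ^ (-β))) * t
          = 2 * ((d:ℝ) * ((n:ℝ) * (n:ℝ) ^ (-β))) * (t / t) := by ring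
      rw [this, div_self ht.ne']
      nlinarith [mul_pos (mul_pos hdpos (mul_pos hn0 hnb)) ht]
    calc μ {ω | ((Finset.univ.filter fun j : Fin n =>
          ¬ ∀ i, |X j ω i| ≤ σ i * t).card : ℝ)
            ≤ 3 * d * (n : ℝ) ^ (1 - β)}ᶜ
        ≤ μ {ω | ε ≤ f ω} := measure_mono hsub
      _ ≤ (∫⁻ ω, f ω ∂μ) / ε := hmarkov
      _ ≤ ENNReal.ofReal ((n:ℝ) * ((d:ℝ) * (2 / t * (n:ℝ) ^ (-β)))) / ε := by
          rw [hlint]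
          exact ENNReal.div_le_div_right hsum _
      _ = ENNReal.ofReal (((n:ℝ) * ((d:ℝ) * (2 / t * (n:ℝ) ^ (-β))))
            / (3 * d * (n : ℝ) ^ (1 - β))) := by
          rw [hε_def, ← ENNReal.ofReal_div_of_pos hy]
      _ ≤ ENNReal.ofReal (2 / t) := ENNReal.ofReal_le_ofReal hfrac
  -- the upper bound tends to zero
  have htInf : Tendsto (fun n : ℕ => Real.sqrt (Real.log n / c)) atTop atTop := by
    have hsqrt : Tendsto Real.sqrt atTop atTop := by
      rw [tendsto_atTop_atTop]
      intro b
      refine ⟨max (b ^ 2) 0, fun a ha => ?_⟩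
      calc b ≤ |b| := le_abs_self b
        _ = Real.sqrt (b ^ 2) := (Real.sqrt_sq_eq_abs b).symm
        _ ≤ Real.sqrt a := Real.sqrt_le_sqrt (le_trans (le_max_left _ _) ha)
    apply hsqrt.comp
    apply Tendsto.atTop_div_const hc
    exact Real.tendsto_log_atTop.comp tendsto_natCast_atTop_atTop
  have hub : Tendsto (fun n : ℕ => ENNReal.ofReal (2 / Real.sqrt (Real.log n / c)))
      atTop (nhds 0) := by
    have h0 : Tendsto (fun n : ℕ => 2 / Real.sqrt (Real.log n / c)) atTop (nhds 0) :=
      Tendsto.div_atTop tendsto_const_nhds htInf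
    simpa using ENNReal.tendsto_ofReal h0
  have hcompl : Tendsto (fun n : ℕ => μ {ω | ((Finset.univ.filter fun j : Fin n =>
      ¬ ∀ i, |X j ω i| ≤ σ i * Real.sqrt (Real.log n / c)).card : ℝ)
        ≤ 3 * d * (n : ℝ) ^ (1 - β)}ᶜ) atTop (nhds 0) := by
    refine tendsto_of_tendsto_of_tendsto_of_le_of_le' tendsto_const_nhds hub
      (Eventually.of_forall fun n => zero_le) ?_
    filter_upwards [eventually_ge_atTop 2] with n hn
    exact key n hn
  have hμE : ∀ n : ℕ, μ {ω | ((Finset.univ.filter fun j : Fin n =>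
      ¬ ∀ i, |X j ω i| ≤ σ i * Real.sqrt (Real.log n / c)).card : ℝ)
        ≤ 3 * d * (n : ℝ) ^ (1 - β)}
      = 1 - μ {ω | ((Finset.univ.filter fun j : Fin n =>
      ¬ ∀ i, |X j ω i| ≤ σ i * Real.sqrt (Real.log n / c)).card : ℝ)
        ≤ 3 * d * (n : ℝ) ^ (1 - β)}ᶜ := by
    intro n
    rw [measure_compl (hEmeas n) (measure_ne_top μ _), measure_univ]
    rw [ENNReal.sub_sub_cancel ENNReal.one_ne_top (prob_le_one)]
  simp only [hμE]
  have := ENNReal.Tendsto.sub (tendsto_const_nhds (x := (1:ℝ≥0∞))) hcompl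
    (Or.inl ENNReal.one_ne_top)
  simpa using this
end
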